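/- Let d ≥ 2 be an integer and define T : ℝ^{d−1} × ℝ × (ℝ^{d−1})^d → (ℝ^{d−1} × ℝ)^d by T(w, r, z₁, …, z_d) = ((w+z₁, r−‖z₁‖²), …, (w+z_d, r−‖z_d‖²)). Then T is differentiable and the absolute value of the determinant of its derivative at (w, r, z₁, …, z_d) equals 2^{d−1} |det(z₂−z₁, …, z_d−z₁)| = 2^{d−1} (d−1)! Δ_{d−1}(z₁, …, z_d). -/

import Mathlib

open MeasureTheory

/-- `Δ_{d-1}(y₁,…,y_d) = |det(y₂-y₁,…,y_d-y₁)|/(d-1)!`, the `(d-1)`-dimensional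
volume of the simplex `conv(y₁,…,y_d)` in `ℝ^{d-1}`. -/
noncomputable def svol (d : ℕ) (hd : 2 ≤ d)
    (y : Fin d → EuclideanSpace ℝ (Fin (d - 1))) : ℝ :=
  |(Matrix.of fun k j : Fin (d - 1) =>
      (y ⟨j.val + 1, by have := j.isLt; omega⟩ - y ⟨0, by omega⟩) k).det| /
    (Nat.factorial (d - 1))

/-- The map `T(w,r,z₁,…,z_d) = ((w+z₁, r-‖z₁‖²),…,(w+z_d, r-‖z_d‖²))`. -/
noncomputable def Tmap (d : ℕ) :
    EuclideanSpace ℝ (Fin (d - 1)) × ℝ × (Fin d → EuclideanSpace ℝ (Fin (d - 1))) →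
      Fin d → EuclideanSpace ℝ (Fin (d - 1)) × ℝ :=
  fun p i => (p.1 + p.2.2 i, p.2.1 - ‖p.2.2 i‖ ^ 2)

/-- Coordinates of the codomain `(ℝ^{d-1} × ℝ)^d` indexed by `Fin d × Fin d`:
index `(i,k)` is the `k`-th coordinate of `v_i` when `k < d-1`, and `h_i` when `k = d-1`. -/
noncomputable def outCoord (d : ℕ) (ik : Fin d × Fin d)
    (y : Fin d → EuclideanSpace ℝ (Fin (d - 1)) × ℝ) : ℝ :=
  if h : ik.2.val < d - 1 then (y ik.1).1 ⟨ik.2.val, h⟩ else (y ik.1).2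

/-- The standard basis of the domain `ℝ^{d-1} × ℝ × (ℝ^{d-1})^d` indexed by
`Fin d × Fin d`: index `(j,l)` with `l < d-1` is the `l`-th basis vector of the
`z_j`-block; `(j, d-1)` with `j < d-1` is the `j`-th basis vector of the `w`-block;
`(d-1, d-1)` is the basis vector of the `r`-block. -/
noncomputable def inVec (d : ℕ) (jl : Fin d × Fin d) :
    EuclideanSpace ℝ (Fin (d - 1)) × ℝ × (Fin d → EuclideanSpace ℝ (Fin (d - 1))) :=
  if h : jl.2.val < d - 1 then
    (0, 0, Pi.single jl.1 (EuclideanSpace.single ⟨jl.2.val, h⟩ (1 : ℝ)))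
  else if h2 : jl.1.val < d - 1 then
    (EuclideanSpace.single ⟨jl.1.val, h2⟩ (1 : ℝ), 0, 0)
  else (0, 1, 0)


open ContinuousLinearMap in
noncomputable abbrev Esp (d : ℕ) := EuclideanSpace ℝ (Fin (d - 1))

open ContinuousLinearMap

noncomputable def zproj (d : ℕ) (i : Fin d) :
    (Esp d × ℝ × (Fin d → Esp d)) →L[ℝ] Esp d :=
  (ContinuousLinearMap.proj i).comp
    ((ContinuousLinearMap.snd ℝ ℝ (Fin d → Esp d)).comp
      (ContinuousLinearMap.snd ℝ (Esp d) (ℝ × (Fin d → Esp d))))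

noncomputable def Lmap (d : ℕ) (p : Esp d × ℝ × (Fin d → Esp d)) :
    (Esp d × ℝ × (Fin d → Esp d)) →L[ℝ] (Fin d → Esp d × ℝ) :=
  ContinuousLinearMap.pi fun i =>
    ((ContinuousLinearMap.fst ℝ (Esp d) (ℝ × (Fin d → Esp d)) + zproj d i).prod
      (((ContinuousLinearMap.fst ℝ ℝ (Fin d → Esp d)).comp
          (ContinuousLinearMap.snd ℝ (Esp d) (ℝ × (Fin d → Esp d)))) -
        ((2 • innerSL ℝ (p.2.2 i)).comp (zproj d i))))

theorem hasFDeriv_Tmap (d : ℕ) (p : Esp d × ℝ × (Fin d → Esp d)) :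
    HasFDerivAt (Tmap d) (Lmap d p) p := by
  rw [hasFDerivAt_pi']
  intro i
  have h1 : HasFDerivAt (fun q : Esp d × ℝ × (Fin d → Esp d) => q.1 + q.2.2 i)
      (ContinuousLinearMap.fst ℝ (Esp d) (ℝ × (Fin d → Esp d)) + zproj d i) p :=
    (ContinuousLinearMap.fst ℝ (Esp d) (ℝ × (Fin d → Esp d)) + zproj d i).hasFDerivAt
  have h2 : HasFDerivAt (fun q : Esp d × ℝ × (Fin d → Esp d) => q.2.1 - ‖q.2.2 i‖ ^ 2)
      (((ContinuousLinearMap.fst ℝ ℝ (Fin d → Esp d)).comp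
          (ContinuousLinearMap.snd ℝ (Esp d) (ℝ × (Fin d → Esp d)))) -
        ((2 • innerSL ℝ (p.2.2 i)).comp (zproj d i))) p := by
    have ha : HasFDerivAt (fun q : Esp d × ℝ × (Fin d → Esp d) => q.2.1)
        (((ContinuousLinearMap.fst ℝ ℝ (Fin d → Esp d)).comp
          (ContinuousLinearMap.snd ℝ (Esp d) (ℝ × (Fin d → Esp d))))) p :=
      (((ContinuousLinearMap.fst ℝ ℝ (Fin d → Esp d)).comp
          (ContinuousLinearMap.snd ℝ (Esp d) (ℝ × (Fin d → Esp d))))).hasFDerivAt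
    have hb : HasFDerivAt (fun q : Esp d × ℝ × (Fin d → Esp d) => ‖q.2.2 i‖ ^ 2)
        ((2 • innerSL ℝ (p.2.2 i)).comp (zproj d i)) p := by
      have := ((zproj d i).hasFDerivAt (x := p)).norm_sq
      simpa [zproj] using this
    exact ha.sub hb
  exact (h1.prodMk h2).congr_fderiv (by ext v <;> simp [Lmap])

noncomputable def Mmat (d : ℕ) (z : Fin d → Esp d) :
    Matrix (Fin d × Fin d) (Fin d × Fin d) ℝ := Matrix.of fun ik jl =>
  if hl : jl.2.val < d - 1 then
    if ik.2.val < d - 1 then (if ik.1 = jl.1 ∧ ik.2.val = jl.2.val then 1 else 0)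
    else (if ik.1 = jl.1 then -(2 * z jl.1 ⟨jl.2.val, hl⟩) else 0)
  else if jl.1.val < d - 1 then
    (if ik.2.val < d - 1 ∧ ik.2.val = jl.1.val then 1 else 0)
  else (if ik.2.val < d - 1 then 0 else 1)


noncomputable def Kmat (d : ℕ) (z : Fin d → Esp d) : Matrix (Fin d) (Fin d) ℝ :=
  Matrix.of fun i j => if h : j.val < d - 1 then 2 * z i ⟨j.val, h⟩ else 1

def eqv1 (d : ℕ) (hd : 2 ≤ d) : (Fin d × Fin (d - 1)) ⊕ Fin d ≃ Fin d × Fin d where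
  toFun x := match x with
    | .inl (i, k) => (i, ⟨k.val, by have := k.isLt; omega⟩)
    | .inr i => (i, ⟨d - 1, by omega⟩)
  invFun ik := if h : ik.2.val < d - 1 then .inl (ik.1, ⟨ik.2.val, h⟩) else .inr ik.1
  left_inv := by
    rintro (⟨i, k⟩ | i)
    · simp [k.isLt]
    · simp
  right_inv := by
    rintro ⟨i, k⟩
    by_cases h : k.val < d - 1
    · simp [h]
    · simp only [h, dif_neg, not_false_iff]
      have : k = ⟨d - 1, by omega⟩ := Fin.ext (show k.val = d - 1 by have := k.isLt; omega)
      simp [this]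

def eqv2 (d : ℕ) (hd : 2 ≤ d) : Unit ⊕ Fin (d - 1) ≃ Fin d where
  toFun x := match x with
    | .inl _ => ⟨0, by omega⟩
    | .inr k => ⟨k.val + 1, by have := k.isLt; omega⟩
  invFun j := if h : 0 < j.val then .inr ⟨j.val - 1, by have := j.isLt; omega⟩ else .inl ()
  left_inv := by rintro (_ | k) <;> simp
  right_inv := by
    rintro j
    by_cases h : 0 < j.val
    · simp only [h, dif_pos]
      exact Fin.ext (show j.val - 1 + 1 = j.val by omega)
    · simp only [h, dif_neg, not_false_iff]
      exact Fin.ext (show (0 : ℕ) = j.val by omega)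

def eqv3 (d : ℕ) (hd : 2 ≤ d) : Unit ⊕ Fin (d - 1) ≃ Fin d where
  toFun x := match x with
    | .inl _ => ⟨d - 1, by omega⟩
    | .inr k => ⟨k.val, by have := k.isLt; omega⟩
  invFun j := if h : j.val < d - 1 then .inr ⟨j.val, h⟩ else .inl ()
  left_inv := by
    rintro (_ | k)
    · simp
    · simp [k.isLt]
  right_inv := by
    rintro j
    by_cases h : j.val < d - 1
    · simp [h]
    · simp only [h, dif_neg, not_false_iff]
      exact Fin.ext (show d - 1 = j.val by have := j.isLt; omega)

theorem detMK (d : ℕ) (hd : 2 ≤ d) (z : Fin d → Esp d) :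
    (Mmat d z).det = (Kmat d z).det := by
  rw [← Matrix.det_submatrix_equiv_self (eqv1 d hd) (Mmat d z)]
  have hsub : (Mmat d z).submatrix (eqv1 d hd) (eqv1 d hd) =
      Matrix.fromBlocks 1
        (Matrix.of fun (ik : Fin d × Fin (d - 1)) (j : Fin d) =>
          if j.val < d - 1 ∧ ik.2.val = j.val then (1 : ℝ) else 0)
        (Matrix.of fun (i : Fin d) (jl : Fin d × Fin (d - 1)) =>
          if i = jl.1 then -(2 * z jl.1 jl.2) else 0)
        (Matrix.of fun (i j : Fin d) => if j.val < d - 1 then (0 : ℝ) else 1) := by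
    ext x y
    rcases x with (⟨i, k⟩ | i) <;> rcases y with (⟨j, l⟩ | j) <;>
      simp only [Matrix.submatrix_apply, eqv1, Equiv.coe_fn_mk, Mmat, Matrix.of_apply,
        Matrix.fromBlocks_apply₁₁, Matrix.fromBlocks_apply₁₂, Matrix.fromBlocks_apply₂₁,
        Matrix.fromBlocks_apply₂₂]
    · have hk := k.isLt; have hl := l.isLt
      rw [dif_pos (show ((⟨l.val, by omega⟩ : Fin d)).val < d - 1 from l.isLt),
        if_pos (show ((⟨k.val, by omega⟩ : Fin d)).val < d - 1 from k.isLt)]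
      rw [Matrix.one_apply]
      simp [Prod.ext_iff, Fin.ext_iff]
    · have hk := k.isLt
      rw [dif_neg (show ¬((⟨d - 1, by omega⟩ : Fin d)).val < d - 1 from Nat.lt_irrefl _)]
      simp only [if_pos (show ((⟨k.val, by omega⟩ : Fin d)).val < d - 1 from k.isLt)]
      by_cases hj : j.val < d - 1 <;> simp [hj]
    · have hl := l.isLt
      rw [dif_pos (show ((⟨l.val, by omega⟩ : Fin d)).val < d - 1 from l.isLt)]
      rw [if_neg (show ¬((⟨d - 1, by omega⟩ : Fin d)).val < d - 1 from Nat.lt_irrefl _)]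
    · rw [dif_neg (show ¬((⟨d - 1, by omega⟩ : Fin d)).val < d - 1 from Nat.lt_irrefl _)]
      by_cases hj : j.val < d - 1 <;>
        simp [hj, (show ¬((⟨d - 1, by omega⟩ : Fin d)).val < d - 1 from Nat.lt_irrefl _)]
  rw [hsub, Matrix.det_fromBlocks_one₁₁]
  congr 1
  ext i j
  rw [Matrix.sub_apply, Matrix.mul_apply, Fintype.sum_prod_type]
  have hsum : ∀ i' : Fin d, ∑ l : Fin (d - 1),
      (Matrix.of fun (i : Fin d) (jl : Fin d × Fin (d - 1)) =>
          if i = jl.1 then -(2 * z jl.1 jl.2) else 0) i (i', l) *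
        (Matrix.of fun (ik : Fin d × Fin (d - 1)) (j : Fin d) =>
          if j.val < d - 1 ∧ ik.2.val = j.val then (1 : ℝ) else 0) (i', l) j =
      if i = i' then (if h : j.val < d - 1 then -(2 * z i ⟨j.val, h⟩) else 0) else 0 := by
    intro i'
    by_cases hii : i = i'
    · subst hii
      simp only [Matrix.of_apply, if_pos rfl]
      by_cases hj : j.val < d - 1
      · rw [dif_pos hj]
        have : ∀ l : Fin (d - 1), (if j.val < d - 1 ∧ l.val = j.val then (1 : ℝ) else 0) =
            if l = ⟨j.val, hj⟩ then 1 else 0 := by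
          intro l; simp [hj, Fin.ext_iff]
        simp only [this, mul_ite, mul_one, mul_zero]
        rw [Finset.sum_ite_eq' Finset.univ (⟨j.val, hj⟩ : Fin (d - 1))]
        simp
      · rw [dif_neg hj]
        simp [hj]
    · simp [hii]
  rw [Finset.sum_congr rfl fun i' _ => hsum i']
  rw [Finset.sum_ite_eq Finset.univ i _]
  simp only [Finset.mem_univ, if_pos, Matrix.of_apply, Kmat]
  by_cases hj : j.val < d - 1 <;> simp [hj]

theorem absdetK (d : ℕ) (hd : 2 ≤ d) (z : Fin d → Esp d) :
    |(Kmat d z).det| = (2 : ℝ) ^ (d - 1) *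
      |(Matrix.of fun k j : Fin (d - 1) =>
          (z ⟨j.val + 1, by have := j.isLt; omega⟩ - z ⟨0, by omega⟩) k).det| := by
  rw [← Matrix.abs_det_submatrix_equiv_equiv (eqv2 d hd) (eqv3 d hd) (Kmat d z)]
  have hsub : (Kmat d z).submatrix (eqv2 d hd) (eqv3 d hd) =
      Matrix.fromBlocks 1
        (Matrix.of fun (_ : Unit) (k' : Fin (d - 1)) => 2 * z ⟨0, by omega⟩ k')
        (Matrix.of fun (_ : Fin (d - 1)) (_ : Unit) => (1 : ℝ))
        (Matrix.of fun (k k' : Fin (d - 1)) =>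
          2 * z ⟨k.val + 1, by have := k.isLt; omega⟩ k') := by
    ext x y
    rcases x with (_ | k) <;> rcases y with (_ | k') <;>
      simp only [Matrix.submatrix_apply, eqv2, eqv3, Equiv.coe_fn_mk, Kmat, Matrix.of_apply,
        Matrix.fromBlocks_apply₁₁, Matrix.fromBlocks_apply₁₂, Matrix.fromBlocks_apply₂₁,
        Matrix.fromBlocks_apply₂₂]
    · rw [dif_neg (show ¬((⟨d - 1, by omega⟩ : Fin d)).val < d - 1 from Nat.lt_irrefl _)]
      simp [Matrix.one_apply]
    · rw [dif_pos (show ((⟨k'.val, by omega⟩ : Fin d)).val < d - 1 from k'.isLt)]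
    · rw [dif_neg (show ¬((⟨d - 1, by omega⟩ : Fin d)).val < d - 1 from Nat.lt_irrefl _)]
    · rw [dif_pos (show ((⟨k'.val, by omega⟩ : Fin d)).val < d - 1 from k'.isLt)]
  rw [hsub, Matrix.det_fromBlocks_one₁₁]
  have hCB : (Matrix.of fun (_ : Fin (d - 1)) (_ : Unit) => (1 : ℝ)) *
      (Matrix.of fun (_ : Unit) (k' : Fin (d - 1)) => 2 * z ⟨0, by omega⟩ k') =
      Matrix.of fun (_ k' : Fin (d - 1)) => 2 * z ⟨0, by omega⟩ k' := by
    ext k k'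
    rw [Matrix.mul_apply]
    simp
  rw [hCB]
  have hD : (Matrix.of fun (k k' : Fin (d - 1)) =>
        2 * z ⟨k.val + 1, by have := k.isLt; omega⟩ k') -
      (Matrix.of fun (_ k' : Fin (d - 1)) => 2 * z ⟨0, by omega⟩ k') =
      (2 : ℝ) • (Matrix.of fun k j : Fin (d - 1) =>
          (z ⟨j.val + 1, by have := j.isLt; omega⟩ - z ⟨0, by omega⟩) k).transpose := by
    ext k k'
    simp only [Matrix.sub_apply, Matrix.of_apply, Matrix.smul_apply, Matrix.transpose_apply,
      smul_eq_mul]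
    rw [PiLp.sub_apply]; ring
  rw [hD, Matrix.det_smul, Matrix.det_transpose]
  rw [abs_mul]
  congr 1
  rw [Fintype.card_fin]
  rw [abs_pow]
  norm_num

theorem entries (d : ℕ) (w : Esp d) (r : ℝ) (z : Fin d → Esp d) :
    (Matrix.of fun ik jl : Fin d × Fin d =>
      outCoord d ik ((Lmap d (w, r, z)) (inVec d jl))) = Mmat d z := by
  ext ik jl
  obtain ⟨i, k⟩ := ik
  obtain ⟨j, l⟩ := jl
  simp only [Matrix.of_apply, Mmat, outCoord, inVec, Lmap, zproj]
  by_cases hl : l.val < d - 1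
  · simp only [hl, dif_pos]
    by_cases hk : k.val < d - 1
    · simp only [hk, dif_pos, if_pos hk]
      by_cases hij : i = j
      · subst hij
        simp only [pi_apply, prod_apply, add_apply, coe_fst', comp_apply, proj_apply,
          coe_snd', Pi.single_eq_same, zero_add]
        rw [EuclideanSpace.single_apply]
        simp only [true_and, Prod.fst_add]
        by_cases hkl : k.val = l.val
        · have : (⟨l.val, hl⟩ : Fin (d-1)) = ⟨k.val, hk⟩ := by simp [hkl]
          simp [this, hkl]
        · have : ¬((⟨l.val, hl⟩ : Fin (d-1)) = ⟨k.val, hk⟩) := by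
            simp [Fin.ext_iff]; omega
          simp [this, hkl]
      · simp only [pi_apply, prod_apply, add_apply, coe_fst', comp_apply, proj_apply,
          coe_snd', Pi.single_eq_of_ne hij]
        simp [hij]
    · simp only [hk, dif_neg, not_false_iff, if_neg]
      by_cases hij : i = j
      · subst hij
        simp only [pi_apply, prod_apply, sub_apply, coe_fst', comp_apply, coe_snd',
          proj_apply, Pi.single_eq_same, smul_apply, innerSL_apply_apply, if_pos rfl]
        rw [EuclideanSpace.inner_single_right]
        simp [mul_comm]
      · simp only [pi_apply, prod_apply, sub_apply, coe_fst', comp_apply, coe_snd',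
          proj_apply, Pi.single_eq_of_ne hij, if_neg hij]
        simp
  · simp only [hl, dif_neg, not_false_iff]
    by_cases hj : j.val < d - 1
    · simp only [hj, dif_pos, if_pos hj]
      by_cases hk : k.val < d - 1
      · simp only [hk, dif_pos]
        simp only [pi_apply, prod_apply, add_apply, coe_fst', comp_apply, proj_apply, coe_snd',
          Pi.zero_apply, add_zero]
        rw [EuclideanSpace.single_apply]
        by_cases hkj : k.val = j.val
        · have : (⟨j.val, hj⟩ : Fin (d-1)) = ⟨k.val, hk⟩ := by simp [hkj]
          simp [this, hk, hkj]
        · have : ¬((⟨j.val, hj⟩ : Fin (d-1)) = ⟨k.val, hk⟩) := by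
            simp [Fin.ext_iff]; omega
          simp [this, hk, hkj]
      · simp only [hk, dif_neg, not_false_iff]
        simp [hk]
    · simp only [hj, dif_neg, not_false_iff, if_neg]
      by_cases hk : k.val < d - 1
      · simp [hk]
      · simp [hk]

/-- `T` is differentiable and the absolute value of the determinant
of its derivative (in orthonormal coordinates) at `(w,r,z₁,…,z_d)` equals
`2^{d-1} |det(z₂-z₁,…,z_d-z₁)| = 2^{d-1} (d-1)! Δ_{d-1}(z₁,…,z_d)`. -/
theorem stmt_15 (d : ℕ) (hd : 2 ≤ d)
    (w : EuclideanSpace ℝ (Fin (d - 1))) (r : ℝ)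
    (z : Fin d → EuclideanSpace ℝ (Fin (d - 1))) :
    Differentiable ℝ (Tmap d) ∧
    |(Matrix.of fun ik jl : Fin d × Fin d =>
        outCoord d ik (fderiv ℝ (Tmap d) (w, r, z) (inVec d jl))).det|
      = (2 : ℝ) ^ (d - 1) *
          |(Matrix.of fun k j : Fin (d - 1) =>
              (z ⟨j.val + 1, by have := j.isLt; omega⟩ - z ⟨0, by omega⟩) k).det| ∧
    (2 : ℝ) ^ (d - 1) *
        |(Matrix.of fun k j : Fin (d - 1) =>
            (z ⟨j.val + 1, by have := j.isLt; omega⟩ - z ⟨0, by omega⟩) k).det|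
      = (2 : ℝ) ^ (d - 1) * (Nat.factorial (d - 1) : ℝ) * svol d hd z := by
  have hfd : ∀ p, HasFDerivAt (Tmap d) (Lmap d p) p := hasFDeriv_Tmap d
  refine ⟨fun p => (hfd p).differentiableAt, ?_, ?_⟩
  · have hM : fderiv ℝ (Tmap d) (w, r, z) = Lmap d (w, r, z) := (hfd (w, r, z)).fderiv
    rw [hM, entries d w r z, detMK d hd z, absdetK d hd z]
  · rw [svol, mul_assoc, mul_div_cancel₀]
    exact Nat.cast_ne_zero.2 (Nat.factorial_ne_zero _)
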